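/- For every n ≥ 1, every vector d ∈ [0,1)^n, and every index j ∈ {1,...,n} with d_j = 0, the matrix B(d) := diag(1−d_1,...,1−d_n) + d·1ᵀ is invertible and the j-th column sum of its inverse equals Σ_{i=1}^n (B(d)^{-1})_{ij} = 1 / (1 + Σ_{k=1}^n d_k/(1−d_k)). -/

import Mathlib

noncomputable section

open Matrix

/-- The matrix `B(d) = diag(1−d₁,...,1−dₙ) + d·1ᵀ`, i.e. `B(d)ᵢⱼ = (1−dᵢ)δᵢⱼ + dᵢ`. -/
def Bmat (n : ℕ) (d : Fin n → ℝ) : Matrix (Fin n) (Fin n) ℝ :=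
  Matrix.of fun i j => (if i = j then 1 - d i else 0) + d i

/-- for `d ∈ [0,1)ⁿ` and an index `j` with `dⱼ = 0`, `B(d)` is invertible
and the `j`-th column sum of its inverse equals `1 / (1 + ∑ₖ dₖ/(1−dₖ))`. -/
theorem Bmat_inv_column_sum
    (n : ℕ) (hn : 1 ≤ n) (d : Fin n → ℝ) (hd : ∀ i, d i ∈ Set.Ico (0 : ℝ) 1)
    (j : Fin n) (hj : d j = 0) :
    IsUnit (Bmat n d) ∧
    (∑ i, (Bmat n d)⁻¹ i j) = 1 / (1 + ∑ k, d k / (1 - d k)) := by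
  obtain ⟨S, hS⟩ : ∃ S : ℝ, S = 1 + ∑ k, d k / (1 - d k) := ⟨_, rfl⟩
  have h1 : ∀ i, (1 : ℝ) - d i ≠ 0 := fun i => by have := (hd i).2; linarith
  have hSpos : 0 < S := by
    have hnn : ∀ k ∈ Finset.univ, (0:ℝ) ≤ d k / (1 - d k) := fun k _ =>
      div_nonneg (hd k).1 (by have := (hd k).2; linarith)
    have := Finset.sum_nonneg hnn
    rw [hS]; linarith
  have hSne : S ≠ 0 := ne_of_gt hSpos
  set M : Matrix (Fin n) (Fin n) ℝ :=
    Matrix.of (fun i j => (if i = j then (1 - d i)⁻¹ else 0)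
      - d i / ((1 - d i) * (1 - d j) * S)) with hM
  have colsum : ∀ q : Fin n, ∑ k, M k q = 1 / ((1 - d q) * S) := by
    intro q
    have hsplit : ∑ k, M k q =
        (∑ k, (if k = q then (1 - d k)⁻¹ else 0))
        - ∑ k, d k / ((1 - d k) * (1 - d q) * S) := by
      rw [← Finset.sum_sub_distrib]; rfl
    rw [hsplit, Finset.sum_ite_eq' Finset.univ q, if_pos (Finset.mem_univ q)]
    have h2 : ∑ k, d k / ((1 - d k) * (1 - d q) * S)
        = (S - 1) * (1 / ((1 - d q) * S)) := by
      have hSm : S - 1 = ∑ k, d k / (1 - d k) := by rw [hS]; ring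
      rw [hSm, Finset.sum_mul]
      refine Finset.sum_congr rfl fun k _ => ?_
      rw [div_mul_div_comm, mul_one, mul_assoc]
    rw [h2]
    field_simp [h1 q, hSne]
    ring
  have hBM : Bmat n d * M = 1 := by
    ext i q
    rw [Matrix.mul_apply]
    have hexp : ∀ k, Bmat n d i k * M k q =
        (if i = k then (1 - d i) * M k q else 0) + d i * M k q := by
      intro k
      simp only [Bmat, Matrix.of_apply]
      by_cases h : i = k <;> simp [h] <;> ring
    simp only [hexp]
    rw [Finset.sum_add_distrib, Finset.sum_ite_eq Finset.univ i,
      if_pos (Finset.mem_univ i), ← Finset.mul_sum, colsum q]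
    have hMiq : M i q = (if i = q then (1 - d i)⁻¹ else 0)
        - d i / ((1 - d i) * (1 - d q) * S) := rfl
    rw [hMiq, Matrix.one_apply]
    by_cases h : i = q
    · subst h
      simp only [eq_self_iff_true, if_true]
      rw [mul_sub, mul_inv_cancel₀ (h1 i)]
      have e2 : (1 - d i) * (d i / ((1 - d i) * (1 - d i) * S))
          = d i / ((1 - d i) * S) := by
        rw [mul_assoc, mul_div_assoc', mul_div_mul_left _ _ (h1 i)]
      rw [e2]
      ring
    · simp only [if_neg h]
      field_simp [h1 i, h1 q, hSne]
      ring
  have hdet : IsUnit (Bmat n d) := by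
    rw [Matrix.isUnit_iff_isUnit_det]
    apply IsUnit.of_mul_eq_one (M).det
    rw [← Matrix.det_mul, hBM, Matrix.det_one]
  refine ⟨hdet, ?_⟩
  rw [Matrix.inv_eq_right_inv hBM]
  rw [colsum j, hj, hS]
  norm_num
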